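/- Let X = {x₀,x₁,x₂} with P(x₀) = 1−2ε, P(x₁) = P(x₂) = ε for 0 < ε ≤ 1/2. Define η ≡ 1, g ≡ 1, f(x₀)=1, f(x₁)=f(x₂)=0, h(x₀)=h(x₁)=+1, h(x₂)=−1, and c = h·g. Then: (i) E_x[c(x)·(f(x) − η(x))] = 0 (so f is 0-multiaccurate w.r.t. {c}); (ii) Pr_x(h(x) ≠ sign encoding of η(x) | x ∈ g), i.e. Pr_x(x = x₂) = ε; and (iii) Pr_x(f(x) ≠ η(x) | x ∈ g) = 2ε. -/
import Mathlib


/-- A 0-multiaccurate predictor can have twice the conditional error of the benchmark. -/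
theorem stmt_13 (ε : ℝ) (hε : 0 < ε) (hε' : ε ≤ 1 / 2) :
    let p : Fin 3 → ℝ := ![1 - 2 * ε, ε, ε]
    let η : Fin 3 → ℝ := fun _ => 1
    let f : Fin 3 → ℝ := ![1, 0, 0]
    let h : Fin 3 → ℝ := ![1, 1, -1]
    let g : Fin 3 → ℝ := fun _ => 1
    let c : Fin 3 → ℝ := fun x => h x * g x
    (∑ x, p x * (c x * (f x - η x)) = 0) ∧
    (∑ x, (if h x = 2 * η x - 1 then 0 else p x)) = ε ∧
    (∑ x, (if f x = η x then 0 else p x)) = 2 * ε := by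
  refine ⟨?_, ?_, ?_⟩ <;> simp [Fin.sum_univ_three] <;> norm_num <;> ring
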